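/- For all natural numbers c ≥ 1 and M ≥ 1, the not-diminishing sequence A_{c,M} defined by f(0) = 1, f(n) = 1 for 1 ≤ n < M, and f(n) = c for n ≥ M, is cobweb-admissible: for all 0 ≤ k ≤ n, (∏_{i=1}^{k} f(i))·(∏_{i=1}^{n-k} f(i)) divides ∏_{i=1}^{n} f(i). -/

import Mathlib

theorem prod_eq_pow (c M : ℕ) (hM : 1 ≤ M) :
    ∀ n : ℕ, (∏ i ∈ Finset.Icc 1 n, if i < M then 1 else c) = c ^ (n - (M - 1)) := by
  intro n
  induction n with
  | zero => simp [Nat.zero_sub]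
  | succ n ih =>
    rw [Finset.prod_Icc_succ_top (by omega), ih]
    by_cases h : n + 1 < M
    · simp [h, Nat.sub_eq_zero_of_le (by omega : n ≤ M - 1),
        Nat.sub_eq_zero_of_le (by omega : n + 1 ≤ M - 1)]
    · have : n + 1 - (M - 1) = (n - (M - 1)) + 1 := by omega
      simp [h, this, pow_succ]

/-- For `c ≥ 1` and `M ≥ 1`, the not-diminishing sequence `A_{c,M}` (which is `1` for
`1 ≤ n < M` and `c` for `n ≥ M`) is cobweb-admissible. -/
theorem not_diminishing_seq_cobweb_admissible (c M : ℕ) (hc : 1 ≤ c) (hM : 1 ≤ M) :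
    ∀ n k : ℕ, k ≤ n →
      (∏ i ∈ Finset.Icc 1 k, if i < M then 1 else c)
          * (∏ i ∈ Finset.Icc 1 (n - k), if i < M then 1 else c) ∣
        ∏ i ∈ Finset.Icc 1 n, if i < M then 1 else c := by
  intro n k hk
  rw [prod_eq_pow c M hM, prod_eq_pow c M hM, prod_eq_pow c M hM, ← pow_add]
  exact pow_dvd_pow c (by omega)
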